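/- Let L ⊆ ℚ̄ × ℚ̄ satisfy the slice dichotomy, the unknot condition, and the no-zero condition, and suppose there exist natural numbers b₁, b₂ such that for all integers p₁, p₂ one has ((p₁ : ℚ), (p₂ : ℚ)) ∈ L if and only if p₁ ≥ 2b₁ + 1 and p₂ ≥ 2b₂ + 1. If moreover ((1 : ℚ), (1 : ℚ)) ∈ L, then for all nonzero rationals r₁, r₂ one has (r₁, r₂) ∈ L if and only if r₁ ≥ 1 and r₂ ≥ 1; equivalently, L = ([1, ∞] × [1, ∞]) ∪ ({∞} × Q*) ∪ (Q* × {∞}), where Q* = {q ∈ ℚ : q ≠ 0} ⊆ ℚ̄. -/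
import Mathlib


/-- The interval `[k,∞] = {∞} ∪ {q : k ≤ q}` in `ℚ̄ = ℚ ∪ {∞}` (`∞ = none`). -/
def infSlice (k : ℤ) : Set (Option ℚ) :=
  {none} ∪ {x | ∃ q : ℚ, x = some q ∧ (k : ℚ) ≤ q}

/-- The interval `[∞,−k] = {∞} ∪ {q : q ≤ −k}` in `ℚ̄`. -/
def negSlice (k : ℤ) : Set (Option ℚ) :=
  {none} ∪ {x | ∃ q : ℚ, x = some q ∧ q ≤ -(k : ℚ)}

/-- A subset of `ℚ̄` is a standard slice if it is `ℚ̄ \ {0}`, or `[k,∞]`,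
or `[∞,−k]` for some positive integer `k`. -/
def StandardSlice (I : Set (Option ℚ)) : Prop :=
  I = {some 0}ᶜ ∨ (∃ k : ℤ, 0 < k ∧ I = infSlice k) ∨
    (∃ k : ℤ, 0 < k ∧ I = negSlice k)

/-- `L` satisfies the slice dichotomy if every horizontal or vertical slice of
`L` with at least two elements is a standard slice. -/
def SliceDichotomy (L : Set (Option ℚ × Option ℚ)) : Prop :=
  ∀ r : Option ℚ,
    ({s | (r, s) ∈ L}.Nontrivial → StandardSlice {s | (r, s) ∈ L}) ∧
    ({s | (s, r) ∈ L}.Nontrivial → StandardSlice {s | (s, r) ∈ L})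

/-- `L` satisfies the unknot condition if `(∞,s) ∈ L` and `(s,∞) ∈ L` for
every `s ∈ ℚ̄` with `s ≠ 0`. -/
def UnknotCondition (L : Set (Option ℚ × Option ℚ)) : Prop :=
  ∀ s : Option ℚ, s ≠ some 0 → (none, s) ∈ L ∧ (s, none) ∈ L

/-- `L` satisfies the no-zero condition if `(r,0) ∉ L` and `(0,r) ∉ L` for
every `r ∈ ℚ̄`. -/
def NoZeroCondition (L : Set (Option ℚ × Option ℚ)) : Prop :=
  ∀ r : Option ℚ, (r, some 0) ∉ L ∧ (some 0, r) ∉ L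

/-- The set `Q* = {q ∈ ℚ : q ≠ 0} ⊆ ℚ̄`. -/
def Qstar : Set (Option ℚ) := {x | ∃ q : ℚ, q ≠ 0 ∧ x = some q}

lemma mem_infSlice {k : ℤ} {q : ℚ} : some q ∈ infSlice k ↔ (k : ℚ) ≤ q := by
  simp [infSlice]

lemma none_mem_infSlice {k : ℤ} : (none : Option ℚ) ∈ infSlice k := by
  simp [infSlice]

lemma mem_negSlice {k : ℤ} {q : ℚ} : some q ∈ negSlice k ↔ q ≤ -(k : ℚ) := by
  simp [negSlice]

/-- Every standard slice contains an integer point. -/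
lemma slice_int_pt {I : Set (Option ℚ)} (h : StandardSlice I) :
    ∃ p : ℤ, some ((p : ℚ)) ∈ I := by
  rcases h with h | ⟨k, hk, h⟩ | ⟨k, hk, h⟩
  · exact ⟨1, by simp [h]⟩
  · exact ⟨k, by rw [h]; exact mem_infSlice.mpr le_rfl⟩
  · exact ⟨-k, by rw [h]; exact mem_negSlice.mpr (by push_cast; exact le_rfl)⟩

/-- A standard slice containing `1` but not `-1` is `[1,∞]`. -/
lemma slice_eq_one {S : Set (Option ℚ)} (hS : StandardSlice S)
    (h1 : some (1:ℚ) ∈ S) (hneg : some (-1:ℚ) ∉ S) : S = infSlice 1 := by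
  rcases hS with h | ⟨k, hk, h⟩ | ⟨k, hk, h⟩
  · exact absurd (by simp [h]) hneg
  · subst h
    rw [mem_infSlice] at h1
    have hk1 : k = 1 := by
      have : k ≤ 1 := by exact_mod_cast h1
      omega
    rw [hk1]
  · subst h
    rw [mem_negSlice] at h1
    have : (1:ℚ) ≤ (k:ℚ) := by exact_mod_cast hk
    linarith

/-- The L-space half of the main theorem, combinatorial core: under the
hypotheses of the structure theorem, if moreover `(1,1) ∈ L`, then for nonzero
rationals `(r₁, r₂) ∈ L ↔ r₁ ≥ 1 ∧ r₂ ≥ 1`; equivalently,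
`L = ([1,∞] × [1,∞]) ∪ ({∞} × Q*) ∪ (Q* × {∞})`. -/
theorem whitehead_lspace_criterion (L : Set (Option ℚ × Option ℚ))
    (hdich : SliceDichotomy L) (hunknot : UnknotCondition L)
    (hnozero : NoZeroCondition L)
    (b₁ b₂ : ℕ)
    (hint : ∀ p₁ p₂ : ℤ,
      (some (p₁ : ℚ), some (p₂ : ℚ)) ∈ L ↔
        (2 * (b₁ : ℤ) + 1 ≤ p₁ ∧ 2 * (b₂ : ℤ) + 1 ≤ p₂))
    (hone : (some (1 : ℚ), some (1 : ℚ)) ∈ L) :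
    (∀ r₁ r₂ : ℚ, r₁ ≠ 0 → r₂ ≠ 0 →
      ((some r₁, some r₂) ∈ L ↔ (1 ≤ r₁ ∧ 1 ≤ r₂))) ∧
    L = (infSlice 1 ×ˢ infSlice 1) ∪ ({none} ×ˢ Qstar) ∪ (Qstar ×ˢ {none}) := by
  -- Step 0: b₁ = b₂ = 0
  have h11 := (hint 1 1).mp (by push_cast; exact hone)
  have hint' : ∀ p₁ p₂ : ℤ, (some ((p₁:ℤ) : ℚ), some ((p₂:ℤ) : ℚ)) ∈ L ↔
      1 ≤ p₁ ∧ 1 ≤ p₂ := by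
    intro p₁ p₂
    rw [hint]
    omega
  -- no point of L in an integer column m < 1
  have no_col : ∀ m : ℤ, m < 1 → ∀ r : ℚ, (some r, some ((m:ℤ):ℚ)) ∉ L := by
    intro m hm r hmem
    rcases eq_or_ne m 0 with rfl | hm0
    · exact (hnozero (some r)).1 (by simpa using hmem)
    rcases eq_or_ne r 0 with rfl | hr0
    · exact (hnozero (some ((m:ℤ):ℚ))).2 hmem
    have hnone : ((none : Option ℚ), some ((m:ℤ):ℚ)) ∈ L :=
      (hunknot (some ((m:ℤ):ℚ)) (by simp [hm0])).1
    have hnt : ({s | (s, some ((m:ℤ):ℚ)) ∈ L} : Set (Option ℚ)).Nontrivial :=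
      ⟨some r, hmem, none, hnone, by simp⟩
    obtain ⟨p, hp⟩ := slice_int_pt ((hdich (some ((m:ℤ):ℚ))).2 hnt)
    have := (hint' p m).mp hp
    omega
  -- no point of L in an integer row m < 1
  have no_row : ∀ m : ℤ, m < 1 → ∀ r : ℚ, (some ((m:ℤ):ℚ), some r) ∉ L := by
    intro m hm r hmem
    rcases eq_or_ne m 0 with rfl | hm0
    · exact (hnozero (some r)).2 (by simpa using hmem)
    rcases eq_or_ne r 0 with rfl | hr0
    · exact (hnozero (some ((m:ℤ):ℚ))).1 hmem
    have hnone : (some ((m:ℤ):ℚ), (none : Option ℚ)) ∈ L :=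
      (hunknot (some ((m:ℤ):ℚ)) (by simp [hm0])).2
    have hnt : ({s | (some ((m:ℤ):ℚ), s) ∈ L} : Set (Option ℚ)).Nontrivial :=
      ⟨some r, hmem, none, hnone, by simp⟩
    obtain ⟨p, hp⟩ := slice_int_pt ((hdich (some ((m:ℤ):ℚ))).1 hnt)
    have := (hint' m p).mp hp
    omega
  -- integer rows p ≥ 1 are [1,∞]
  have row_int : ∀ p : ℤ, 1 ≤ p → {s | (some ((p:ℤ):ℚ), s) ∈ L} = infSlice 1 := by
    intro p hp
    have h1 : (some ((p:ℤ):ℚ), some (1:ℚ)) ∈ L := by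
      have := (hint' p 1).mpr ⟨hp, le_rfl⟩
      simpa using this
    have hpne : ((p:ℤ):ℚ) ≠ 0 := by
      exact_mod_cast (by omega : p ≠ 0)
    have hnone : (some ((p:ℤ):ℚ), (none : Option ℚ)) ∈ L :=
      (hunknot (some ((p:ℤ):ℚ)) (by simp [hpne])).2
    have hneg : some (-1:ℚ) ∉ {s | (some ((p:ℤ):ℚ), s) ∈ L} := by
      have := no_col (-1) (by norm_num) ((p:ℤ):ℚ)
      simpa using this
    exact slice_eq_one ((hdich (some ((p:ℤ):ℚ))).1 ⟨some 1, h1, none, hnone, by simp⟩)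
      h1 hneg
  -- integer columns p ≥ 1 are [1,∞]
  have col_int : ∀ p : ℤ, 1 ≤ p → {s | (s, some ((p:ℤ):ℚ)) ∈ L} = infSlice 1 := by
    intro p hp
    have h1 : (some (1:ℚ), some ((p:ℤ):ℚ)) ∈ L := by
      have := (hint' 1 p).mpr ⟨le_rfl, hp⟩
      simpa using this
    have hpne : ((p:ℤ):ℚ) ≠ 0 := by
      exact_mod_cast (by omega : p ≠ 0)
    have hnone : ((none : Option ℚ), some ((p:ℤ):ℚ)) ∈ L :=
      (hunknot (some ((p:ℤ):ℚ)) (by simp [hpne])).1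
    have hneg : some (-1:ℚ) ∉ {s | (s, some ((p:ℤ):ℚ)) ∈ L} := by
      have := no_row (-1) (by norm_num) ((p:ℤ):ℚ)
      simpa using this
    exact slice_eq_one ((hdich (some ((p:ℤ):ℚ))).2 ⟨some 1, h1, none, hnone, by simp⟩)
      h1 hneg
  -- rational rows r ≥ 1 are [1,∞]
  have row_ge : ∀ r : ℚ, 1 ≤ r → {s | (some r, s) ∈ L} = infSlice 1 := by
    intro r hr
    have hr0 : r ≠ 0 := by intro h; rw [h] at hr; norm_num at hr
    have h1 : (some r, some (1:ℚ)) ∈ L := by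
      have hc := col_int 1 le_rfl
      have hmem : some r ∈ infSlice 1 := mem_infSlice.mpr (by exact_mod_cast hr)
      rw [← hc] at hmem
      simpa using hmem
    have hnone : (some r, (none : Option ℚ)) ∈ L :=
      (hunknot (some r) (by simp [hr0])).2
    have hneg : some (-1:ℚ) ∉ {s | (some r, s) ∈ L} := by
      have := no_col (-1) (by norm_num) r
      simpa using this
    exact slice_eq_one ((hdich (some r)).1 ⟨some 1, h1, none, hnone, by simp⟩) h1 hneg
  -- rational columns r ≥ 1 are [1,∞]
  have col_ge : ∀ r : ℚ, 1 ≤ r → {s | (s, some r) ∈ L} = infSlice 1 := by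
    intro r hr
    have hr0 : r ≠ 0 := by intro h; rw [h] at hr; norm_num at hr
    have h1 : (some (1:ℚ), some r) ∈ L := by
      have hc := row_int 1 le_rfl
      have hmem : some r ∈ infSlice 1 := mem_infSlice.mpr (by exact_mod_cast hr)
      rw [← hc] at hmem
      simpa using hmem
    have hnone : ((none : Option ℚ), some r) ∈ L :=
      (hunknot (some r) (by simp [hr0])).1
    have hneg : some (-1:ℚ) ∉ {s | (s, some r) ∈ L} := by
      have := no_row (-1) (by norm_num) r
      simpa using this
    exact slice_eq_one ((hdich (some r)).2 ⟨some 1, h1, none, hnone, by simp⟩) h1 hneg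
  -- main criterion for nonzero rationals
  have main : ∀ r₁ r₂ : ℚ, r₁ ≠ 0 → r₂ ≠ 0 →
      ((some r₁, some r₂) ∈ L ↔ (1 ≤ r₁ ∧ 1 ≤ r₂)) := by
    intro r₁ r₂ h1 h2
    constructor
    · intro hmem
      by_cases hge : 1 ≤ r₁
      · refine ⟨hge, ?_⟩
        have hrow := row_ge r₁ hge
        have hs : some r₂ ∈ infSlice 1 := by rw [← hrow]; exact hmem
        have := mem_infSlice.mp hs
        exact_mod_cast this
      · exfalso
        have hnone : (some r₁, (none : Option ℚ)) ∈ L :=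
          (hunknot (some r₁) (by simp [h1])).2
        have hstd := (hdich (some r₁)).1 ⟨some r₂, hmem, none, hnone, by simp⟩
        rcases hstd with h | ⟨k, hk, h⟩ | ⟨k, hk, h⟩
        · have hneg : some ((-1:ℤ):ℚ) ∈ {s | (some r₁, s) ∈ L} := by
            rw [h]; simp
          exact no_col (-1) (by norm_num) r₁ hneg
        · have hmemk : some ((k:ℤ):ℚ) ∈ {s | (some r₁, s) ∈ L} := by
            rw [h]; exact mem_infSlice.mpr le_rfl
          have hck := col_ge ((k:ℤ):ℚ) (by exact_mod_cast (by omega : (1:ℤ) ≤ k))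
          have : some r₁ ∈ infSlice 1 := by rw [← hck]; exact hmemk
          exact hge (by exact_mod_cast mem_infSlice.mp this)
        · have hmemk : some (((-k:ℤ)):ℚ) ∈ {s | (some r₁, s) ∈ L} := by
            rw [h]
            exact mem_negSlice.mpr (by push_cast; exact le_rfl)
          exact no_col (-k) (by omega) r₁ hmemk
    · rintro ⟨hg1, hg2⟩
      have hrow := row_ge r₁ hg1
      have : some r₂ ∈ {s | (some r₁, s) ∈ L} := by
        rw [hrow]; exact mem_infSlice.mpr (by exact_mod_cast hg2)
      exact this
  refine ⟨main, ?_⟩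
  ext ⟨x, y⟩
  constructor
  · intro hmem
    match x, y with
    | none, none =>
        exact Or.inl (Or.inl ⟨none_mem_infSlice, none_mem_infSlice⟩)
    | none, some q =>
        have hq : q ≠ 0 := by
          intro h; subst h; exact (hnozero none).1 hmem
        exact Or.inl (Or.inr ⟨rfl, q, hq, rfl⟩)
    | some q, none =>
        have hq : q ≠ 0 := by
          intro h; subst h; exact (hnozero none).2 hmem
        exact Or.inr ⟨⟨q, hq, rfl⟩, rfl⟩
    | some q₁, some q₂ =>
        have h1 : q₁ ≠ 0 := by
          intro h; subst h; exact (hnozero (some q₂)).2 hmem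
        have h2 : q₂ ≠ 0 := by
          intro h; subst h; exact (hnozero (some q₁)).1 hmem
        obtain ⟨hg1, hg2⟩ := (main q₁ q₂ h1 h2).mp hmem
        exact Or.inl (Or.inl ⟨mem_infSlice.mpr (by exact_mod_cast hg1),
          mem_infSlice.mpr (by exact_mod_cast hg2)⟩)
  · intro hmem
    rcases hmem with (⟨hx, hy⟩ | ⟨hx, hy⟩) | ⟨hx, hy⟩
    · match x, y with
      | none, none => exact (hunknot none (by simp)).1
      | none, some q =>
          have hq : (1:ℚ) ≤ q := by
            have := mem_infSlice.mp hy; exact_mod_cast this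
          exact (hunknot (some q) (by simp; linarith)).1
      | some q, none =>
          have hq : (1:ℚ) ≤ q := by
            have := mem_infSlice.mp hx; exact_mod_cast this
          exact (hunknot (some q) (by simp; linarith)).2
      | some q₁, some q₂ =>
          have hq1 : (1:ℚ) ≤ q₁ := by
            have := mem_infSlice.mp hx; exact_mod_cast this
          have hq2 : (1:ℚ) ≤ q₂ := by
            have := mem_infSlice.mp hy; exact_mod_cast this
          exact (main q₁ q₂ (by linarith) (by linarith)).mpr ⟨hq1, hq2⟩
    · obtain ⟨q, hq, rfl⟩ := hy
      obtain rfl : x = none := hx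
      exact (hunknot (some q) (by simp [hq])).1
    · obtain ⟨q, hq, rfl⟩ := hx
      obtain rfl : y = none := hy
      exact (hunknot (some q) (by simp [hq])).2
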